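/- Let β > 2 be a real number and let Δ be a natural number with Δ ≥ 8 and Δ ≥ (8^β + 2·4^β + 6·2^β + 7)/(1 + 2^β). Then ∑_{i=1}^{Δ} (Δ + 1 − i)/((Δ+1)·i^β) ≥ 1 + 2^{−β}. -/

import Mathlib

theorem stmt_5 (β : ℝ) (hβ : 2 < β) (Δ : ℕ) (hΔ8 : 8 ≤ Δ)
    (hΔ : ((8 : ℝ) ^ β + 2 * (4 : ℝ) ^ β + 6 * (2 : ℝ) ^ β + 7) / (1 + (2 : ℝ) ^ β) ≤ (Δ : ℝ)) :
    1 + (2 : ℝ) ^ (-β) ≤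
      ∑ i ∈ Finset.Icc 1 Δ, ((Δ : ℝ) + 1 - (i : ℝ)) / (((Δ : ℝ) + 1) * (i : ℝ) ^ β) := by
  have ha : (0:ℝ) < (2:ℝ) ^ β := Real.rpow_pos_of_pos (by norm_num) β
  have h4 : (4:ℝ) ^ β = (2:ℝ)^β * (2:ℝ)^β := by
    rw [show (4:ℝ) = 2*2 by norm_num, Real.mul_rpow (by norm_num) (by norm_num)]
  have h8 : (8:ℝ) ^ β = (2:ℝ)^β * (2:ℝ)^β * (2:ℝ)^β := by
    rw [show (8:ℝ) = 2*2*2 by norm_num, Real.mul_rpow (by norm_num) (by norm_num),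
      Real.mul_rpow (by norm_num) (by norm_num)]
  have hneg : (2:ℝ) ^ (-β) = ((2:ℝ)^β)⁻¹ := Real.rpow_neg (by norm_num) β
  set a := (2:ℝ)^β with ha_def
  have hsub : ({1,2,4,8} : Finset ℕ) ⊆ Finset.Icc 1 Δ := by
    intro i hi
    simp only [Finset.mem_insert, Finset.mem_singleton] at hi
    rw [Finset.mem_Icc]
    rcases hi with h|h|h|h <;> omega
  have key : ∑ i ∈ ({1,2,4,8} : Finset ℕ), ((Δ : ℝ) + 1 - (i : ℝ)) / (((Δ : ℝ) + 1) * (i : ℝ) ^ β)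
      ≤ ∑ i ∈ Finset.Icc 1 Δ, ((Δ : ℝ) + 1 - (i : ℝ)) / (((Δ : ℝ) + 1) * (i : ℝ) ^ β) := by
    apply Finset.sum_le_sum_of_subset_of_nonneg hsub
    intro i hi _
    rw [Finset.mem_Icc] at hi
    apply div_nonneg
    · have : (i:ℝ) ≤ (Δ:ℝ) := by exact_mod_cast hi.2
      linarith
    · have : (0:ℝ) ≤ (i:ℝ) ^ β := Real.rpow_nonneg (by positivity) β
      positivity
  refine le_trans ?_ key
  have hsum : ∑ i ∈ ({1,2,4,8} : Finset ℕ), ((Δ : ℝ) + 1 - (i : ℝ)) / (((Δ : ℝ) + 1) * (i : ℝ) ^ β)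
      = ((Δ:ℝ) + 1 - 1) / (((Δ:ℝ)+1) * (1:ℝ)^β) + ((Δ:ℝ) + 1 - 2) / (((Δ:ℝ)+1) * (2:ℝ)^β)
      + ((Δ:ℝ) + 1 - 4) / (((Δ:ℝ)+1) * (4:ℝ)^β) + ((Δ:ℝ) + 1 - 8) / (((Δ:ℝ)+1) * (8:ℝ)^β) := by
    rw [Finset.sum_insert (by norm_num), Finset.sum_insert (by norm_num),
      Finset.sum_insert (by norm_num), Finset.sum_singleton]
    push_cast
    ring
  rw [hsum, Real.one_rpow, h4, h8, hneg]
  have hN : (9:ℝ) ≤ (Δ:ℝ) + 1 := by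
    have : (8:ℝ) ≤ (Δ:ℝ) := by exact_mod_cast hΔ8
    linarith
  have hΔ' : a*a*a + 2*(a*a) + 6*a + 7 ≤ (Δ:ℝ) * (1 + a) := by
    rw [div_le_iff₀ (by linarith)] at hΔ
    rw [h4, h8] at hΔ
    linarith
  have hNpos : (0:ℝ) < (Δ:ℝ) + 1 := by linarith
  have e1 : 1 + a⁻¹ = (((Δ:ℝ)+1)*(a*a*a) + ((Δ:ℝ)+1)*(a*a)) / (((Δ:ℝ)+1)*(a*a*a)) := by
    field_simp
  have e2 : ((Δ:ℝ) + 1 - 1) / (((Δ:ℝ)+1) * 1) + ((Δ:ℝ) + 1 - 2) / (((Δ:ℝ)+1) * a)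
      + ((Δ:ℝ) + 1 - 4) / (((Δ:ℝ)+1) * (a*a)) + ((Δ:ℝ) + 1 - 8) / (((Δ:ℝ)+1) * (a*a*a))
      = ((((Δ:ℝ)+1)-1)*(a*a*a) + (((Δ:ℝ)+1)-2)*(a*a) + (((Δ:ℝ)+1)-4)*a + (((Δ:ℝ)+1)-8))
        / (((Δ:ℝ)+1)*(a*a*a)) := by
    field_simp
  rw [e1, e2]
  have hd : (0:ℝ) < ((Δ:ℝ)+1)*(a*a*a) := by positivity
  rw [div_le_div_iff₀ hd hd]
  have hexp : (a*a*a + 2*(a*a) + 6*a + 7 : ℝ) ≤ (Δ:ℝ) + (Δ:ℝ)*a := by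
    have : (Δ:ℝ)*(1+a) = (Δ:ℝ) + (Δ:ℝ)*a := by ring
    linarith [hΔ']
  nlinarith [mul_pos (mul_pos ha ha) ha, mul_pos ha ha, ha, hexp, hd,
    mul_le_mul_of_nonneg_right hexp (le_of_lt (mul_pos (mul_pos ha ha) ha))]
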